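/- arXiv:1006.3339 — 3 statements merged into one kernel-verified Lean document; each statement's English description precedes it below -/
import Mathlib

section
/- For integers $r \geq 1$ and $0 \leq k \leq r-1$, and complex numbers $X, Y$ with $e^X \neq 1$, the residue at $Y=0$ of the function $Y \mapsto e^{kY}/((e^Y-1)^r(e^{X-Y}-1))$ equals $e^{kX}/(e^X-1)^r$. -/
open Complex Filter Topology

namespace ResidueAux

lemma analyticAt_deriv {f : ℂ → ℂ} {z : ℂ} (hf : AnalyticAt ℂ f z) :
    AnalyticAt ℂ (deriv f) z := by
  obtain ⟨s, hs, h⟩ := hf.exists_mem_nhds_analyticOnNhd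
  exact h.deriv z (mem_of_mem_nhds hs)

lemma itd_add {f g : ℂ → ℂ} (hf : AnalyticAt ℂ f 0) (hg : AnalyticAt ℂ g 0) :
    ∀ n, iteratedDeriv n (fun y => f y + g y) 0
      = iteratedDeriv n f 0 + iteratedDeriv n g 0 := by
  intro n
  induction n generalizing f g with
  | zero => simp
  | succ n ih =>
    have hev : deriv (fun y => f y + g y) =ᶠ[𝓝 (0:ℂ)] fun y => deriv f y + deriv g y := by
      filter_upwards [hf.eventually_analyticAt, hg.eventually_analyticAt] with y hfy hgy
      exact deriv_add hfy.differentiableAt hgy.differentiableAt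
    rw [iteratedDeriv_succ', hev.iteratedDeriv_eq n,
      ih (analyticAt_deriv hf) (analyticAt_deriv hg), ← iteratedDeriv_succ',
      ← iteratedDeriv_succ']

lemma itd_const_mul {f : ℂ → ℂ} (hf : AnalyticAt ℂ f 0) (a : ℂ) :
    ∀ n, iteratedDeriv n (fun y => a * f y) 0 = a * iteratedDeriv n f 0 := by
  intro n
  induction n generalizing f with
  | zero => simp
  | succ n ih =>
    have hev : deriv (fun y => a * f y) =ᶠ[𝓝 (0:ℂ)] fun y => a * deriv f y := by
      filter_upwards [hf.eventually_analyticAt] with y hfy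
      exact deriv_const_mul a hfy.differentiableAt
    rw [iteratedDeriv_succ', hev.iteratedDeriv_eq n, ih (analyticAt_deriv hf),
      ← iteratedDeriv_succ']

lemma itd_id_mul {v : ℂ → ℂ} (hv : AnalyticAt ℂ v 0) :
    ∀ n, iteratedDeriv (n + 1) (fun y => y * v y) 0 = (n + 1 : ℂ) * iteratedDeriv n v 0 := by
  intro n
  induction n generalizing v with
  | zero =>
    rw [iteratedDeriv_one]
    have : deriv (fun y : ℂ => y * v y) 0 = deriv (fun y : ℂ => y) 0 * v 0
        + 0 * deriv v 0 := deriv_mul differentiableAt_id hv.differentiableAt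
    simp only [deriv_id'', one_mul, zero_mul, add_zero] at this
    simpa [this]
  | succ n ih =>
    have hev : deriv (fun y : ℂ => y * v y) =ᶠ[𝓝 (0:ℂ)] fun y => v y + y * deriv v y := by
      filter_upwards [hv.eventually_analyticAt] with y hvy
      rw [deriv_fun_mul differentiableAt_fun_id hvy.differentiableAt]
      simp [mul_comm]
    rw [iteratedDeriv_succ', hev.iteratedDeriv_eq (n+1),
      itd_add hv (show AnalyticAt ℂ (fun y : ℂ => y * deriv v y) 0 from
        analyticAt_id.mul (analyticAt_deriv hv)) (n+1),
      ih (analyticAt_deriv hv), ← iteratedDeriv_succ']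
    push_cast
    ring

lemma itd_pow_mul {v : ℂ → ℂ} (hv : AnalyticAt ℂ v 0) :
    ∀ n m, n < m → iteratedDeriv n (fun y => y ^ m * v y) 0 = 0 := by
  intro n
  induction n generalizing v with
  | zero =>
    intro m hm
    rw [iteratedDeriv_zero]
    simp [zero_pow (by omega : m ≠ 0)]
  | succ n ih =>
    intro m hm
    obtain ⟨m', rfl⟩ : ∃ m', m = m' + 1 := ⟨m - 1, by omega⟩
    have hfun : (fun y : ℂ => y ^ (m' + 1) * v y) = fun y => y * (y ^ m' * v y) := by
      funext y; ring
    have hw : AnalyticAt ℂ (fun y : ℂ => y ^ m' * v y) 0 :=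
      ((analyticAt_id.pow m').mul hv : AnalyticAt ℂ (fun y : ℂ => (id y : ℂ) ^ m' * v y) 0)
    rw [hfun, itd_id_mul hw n, ih hv m' (by omega), mul_zero]


open Topology in
def Pres (r : ℕ) (f : ℂ → ℂ) (v : ℂ) : Prop :=
  ∃ g : ℂ → ℂ, AnalyticAt ℂ g 0 ∧ (∀ᶠ Y in 𝓝[≠] (0:ℂ), f Y = g Y / Y ^ r) ∧
    iteratedDeriv (r - 1) g 0 = (Nat.factorial (r - 1) : ℂ) * v

lemma Pres.congr {r : ℕ} {f f' : ℂ → ℂ} {v : ℂ} (h : Pres r f v)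
    (he : ∀ᶠ Y in 𝓝[≠] (0:ℂ), f' Y = f Y) : Pres r f' v := by
  obtain ⟨g, hg, hev, hd⟩ := h
  exact ⟨g, hg, he.mp (hev.mono fun Y h1 h2 => h2.trans h1), hd⟩

lemma Pres.add {r : ℕ} {f₁ f₂ : ℂ → ℂ} {v₁ v₂ : ℂ} (h₁ : Pres r f₁ v₁) (h₂ : Pres r f₂ v₂) :
    Pres r (fun Y => f₁ Y + f₂ Y) (v₁ + v₂) := by
  obtain ⟨g₁, hg₁, hev₁, hd₁⟩ := h₁
  obtain ⟨g₂, hg₂, hev₂, hd₂⟩ := h₂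
  refine ⟨fun Y => g₁ Y + g₂ Y, hg₁.add hg₂, ?_, ?_⟩
  · filter_upwards [hev₁, hev₂] with Y e₁ e₂
    rw [e₁, e₂, ← add_div]
  · rw [itd_add hg₁ hg₂, hd₁, hd₂]; ring

lemma Pres.const_mul {r : ℕ} {f : ℂ → ℂ} {v : ℂ} (a : ℂ) (h : Pres r f v) :
    Pres r (fun Y => a * f Y) (a * v) := by
  obtain ⟨g, hg, hev, hd⟩ := h
  refine ⟨fun Y => a * g Y, analyticAt_const.mul hg, ?_, ?_⟩
  · filter_upwards [hev] with Y e
    rw [e, mul_div_assoc]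
  · rw [itd_const_mul hg a, hd]; ring

lemma Pres.analyticAt {r : ℕ} (hr : 1 ≤ r) {f : ℂ → ℂ} (hf : AnalyticAt ℂ f 0) :
    Pres r f 0 := by
  refine ⟨fun y => y ^ r * f y,
    ((analyticAt_id.pow r).mul hf :
      AnalyticAt ℂ (fun y : ℂ => (id y : ℂ) ^ r * f y) 0), ?_, ?_⟩
  · filter_upwards [self_mem_nhdsWithin] with Y hY
    exact (mul_div_cancel_left₀ _ (pow_ne_zero _ hY)).symm
  · rw [itd_pow_mul hf (r-1) r (by omega), mul_zero]

lemma Pres.up {r : ℕ} {f : ℂ → ℂ} {v : ℂ} (hr : 1 ≤ r) (h : Pres r f v) :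
    Pres (r + 1) f v := by
  obtain ⟨r', rfl⟩ : ∃ r', r = r' + 1 := ⟨r - 1, by omega⟩
  obtain ⟨g, hg, hev, hd⟩ := h
  refine ⟨fun y => y * g y, analyticAt_id.mul hg, ?_, ?_⟩
  · filter_upwards [hev, self_mem_nhdsWithin] with Y e hY
    have hY' : (Y:ℂ) ≠ 0 := hY
    rw [e]
    field_simp
    ring
  · simp only [show r' + 1 + 1 - 1 = r' + 1 from rfl, show r' + 1 - 1 = r' from rfl] at hd ⊢
    rw [itd_id_mul hg r', hd, Nat.factorial_succ]
    push_cast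
    ring

lemma pres_deriv {r : ℕ} {u F : ℂ → ℂ} (hu : AnalyticAt ℂ u 0) (hr : 1 ≤ r)
    (hF : ∀ᶠ Y in 𝓝[≠] (0:ℂ), F Y = u Y / Y ^ r) :
    Pres (r + 1) (deriv F) 0 := by
  obtain ⟨r', rfl⟩ : ∃ r', r = r' + 1 := ⟨r - 1, by omega⟩
  have hdu : AnalyticAt ℂ (deriv u) 0 := analyticAt_deriv hu
  refine ⟨fun y => y * deriv u y + (-(r' + 1 : ℂ)) * u y,
    (analyticAt_id.mul hdu).add (analyticAt_const.mul hu), ?_, ?_⟩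
  · -- compute deriv F on a punctured neighborhood
    rw [eventually_nhdsWithin_iff] at hF ⊢
    obtain ⟨t, htF, htopen, ht0⟩ := eventually_nhds_iff.mp hF
    obtain ⟨s, hsu, hsopen, hs0⟩ := eventually_nhds_iff.mp hu.eventually_analyticAt
    have : ∀ᶠ Y in 𝓝 (0:ℂ), Y ∈ t ∩ s :=
      Filter.inter_mem (htopen.mem_nhds ht0) (hsopen.mem_nhds hs0)
    filter_upwards [this] with Y ⟨hYt, hYs⟩ hY
    replace hY : Y ≠ 0 := hY
    have hFev : F =ᶠ[𝓝 Y] fun z => u z / z ^ (r' + 1) := by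
      have : t ∩ s ∩ {0}ᶜ ∈ 𝓝 Y :=
        ((htopen.inter hsopen).inter isOpen_compl_singleton).mem_nhds ⟨⟨hYt, hYs⟩, hY⟩
      filter_upwards [this] with z ⟨⟨hzt, _⟩, hz⟩
      exact htF z hzt hz
    rw [hFev.deriv_eq]
    rw [deriv_fun_div ((hsu Y hYs).differentiableAt) (differentiableAt_pow _) (pow_ne_zero _ hY)]
    rw [deriv_pow_field, Nat.add_sub_cancel]
    field_simp
    push_cast
    ring
  · simp only [show r' + 1 + 1 - 1 = r' + 1 from rfl]
    rw [itd_add (show AnalyticAt ℂ (fun y : ℂ => y * deriv u y) 0 from analyticAt_id.mul hdu)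
        (show AnalyticAt ℂ (fun y : ℂ => (-((r' : ℂ) + 1)) * u y) 0 from analyticAt_const.mul hu),
      itd_id_mul hdu r', itd_const_mul hu _, ← iteratedDeriv_succ']
    ring

noncomputable def DD : ℂ → ℂ := dslope (fun z => Complex.exp z - 1) 0
noncomputable def EE : ℂ → ℂ := fun y => (DD y)⁻¹

lemma DD_an : AnalyticAt ℂ DD 0 := by
  obtain ⟨p, hp⟩ :=
    (analyticAt_cexp.sub analyticAt_const : AnalyticAt ℂ (fun z => Complex.exp z - 1) 0)
  exact ⟨_, hp.has_fpower_series_dslope_fslope⟩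

lemma DD_zero : DD 0 = 1 := by
  rw [DD, dslope_same]
  rw [deriv_sub_const, Complex.deriv_exp, Complex.exp_zero]

lemma DD_mul (Y : ℂ) : Complex.exp Y - 1 = Y * DD Y := by
  have h := sub_smul_dslope (fun z => Complex.exp z - 1) 0 Y
  simp only [smul_eq_mul, sub_zero, Complex.exp_zero, sub_self] at h
  rw [← h]
  rw [DD]

lemma EE_an : AnalyticAt ℂ EE 0 := DD_an.inv (by rw [DD_zero]; exact one_ne_zero)

lemma EE_zero : EE 0 = 1 := by rw [EE, DD_zero, inv_one]

lemma ev_inv : ∀ᶠ Y in 𝓝[≠] (0:ℂ),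
    (Complex.exp Y - 1)⁻¹ = EE Y / Y ∧ Complex.exp Y - 1 ≠ 0 := by
  have hD : ∀ᶠ Y in 𝓝 (0:ℂ), DD Y ≠ 0 :=
    DD_an.continuousAt.eventually_ne (by rw [DD_zero]; exact one_ne_zero)
  filter_upwards [hD.filter_mono nhdsWithin_le_nhds, self_mem_nhdsWithin] with Y h1 hY
  have hY' : (Y:ℂ) ≠ 0 := hY
  constructor
  · rw [DD_mul Y, mul_inv, EE, div_eq_mul_inv, mul_comm]
  · rw [DD_mul Y]; exact mul_ne_zero hY' h1

lemma rho : ∀ j, 1 ≤ j →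
    Pres j (fun Y => ((Complex.exp Y - 1) ^ j)⁻¹) ((-1 : ℂ) ^ (j - 1)) := by
  intro j
  induction j with
  | zero => omega
  | succ j ih =>
    intro _
    rcases Nat.eq_zero_or_pos j with rfl | hj
    · -- base case j + 1 = 1
      refine ⟨EE, EE_an, ?_, ?_⟩
      · filter_upwards [ev_inv] with Y ⟨h1, _⟩
        rw [pow_one, pow_one, h1]
      · simp [EE_zero]
    · -- inductive step
      obtain ⟨j', rfl⟩ : ∃ j', j = j' + 1 := ⟨j - 1, by omega⟩
      have hAan : AnalyticAt ℂ (fun z => Complex.exp z - 1) 0 :=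
        analyticAt_cexp.sub analyticAt_const
      have hFrep : ∀ᶠ Y in 𝓝[≠] (0:ℂ),
          ((Complex.exp Y - 1) ^ (j' + 1))⁻¹ = (fun y => EE y ^ (j' + 1)) Y / Y ^ (j' + 1) := by
        filter_upwards [ev_inv] with Y ⟨h1, _⟩
        show ((Complex.exp Y - 1) ^ (j' + 1))⁻¹ = EE Y ^ (j' + 1) / Y ^ (j' + 1)
        rw [← inv_pow, h1, div_pow]
      have hP0 : Pres (j' + 2)
          (deriv (fun Y => ((Complex.exp Y - 1) ^ (j' + 1))⁻¹)) 0 :=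
        pres_deriv (EE_an.pow (j' + 1)) (by omega) hFrep
      have hAdiff : ∀ Y : ℂ, DifferentiableAt ℂ (fun z => Complex.exp z - 1) Y := fun Y =>
        (Complex.differentiable_exp.sub_const 1) Y
      have hAderiv : ∀ Y : ℂ, deriv (fun z => Complex.exp z - 1) Y = Complex.exp Y := by
        intro Y
        rw [deriv_sub_const, Complex.deriv_exp]
      have hderiv : ∀ᶠ Y in 𝓝[≠] (0:ℂ),
          deriv (fun Y => ((Complex.exp Y - 1) ^ (j' + 1))⁻¹) Y
            = -((j' + 1 : ℕ) : ℂ) * Complex.exp Y * ((Complex.exp Y - 1) ^ (j' + 2))⁻¹ := by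
        have key : ∀ a e : ℂ, a ≠ 0 →
            -((((j' + 1 : ℕ) : ℂ)) * a ^ (j' + 1 - 1) * e) / (a ^ (j' + 1)) ^ 2
              = -(((j' + 1 : ℕ) : ℂ)) * e * (a ^ (j' + 2))⁻¹ := by
          intro a e ha
          simp only [show j' + 1 - 1 = j' from rfl]
          field_simp
          ring
        filter_upwards [ev_inv] with Y ⟨_, hA⟩
        rw [deriv_fun_inv'' ((hAdiff Y).fun_pow (j' + 1)) (pow_ne_zero _ hA)]
        rw [deriv_fun_pow (hAdiff Y), hAderiv Y]
        exact key _ _ hA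
      have hcomb := (((ih hj).up hj).const_mul (-1)).add
        (hP0.const_mul (-(((j' + 1 : ℕ) : ℂ))⁻¹))
      have hjne : (((j' + 1 : ℕ)) : ℂ) ≠ 0 := Nat.cast_ne_zero.mpr (by omega)
      have hval : (-1:ℂ) * (-1) ^ (j' + 1 - 1) + -(((j' + 1 : ℕ) : ℂ))⁻¹ * 0
          = (-1) ^ (j' + 1 + 1 - 1) := by
        simp only [Nat.add_sub_cancel, mul_zero, add_zero]
        rw [pow_succ]
        ring
      rw [← hval]
      refine hcomb.congr ?_
      have key2 : ∀ a e : ℂ, a ≠ 0 → e - a = 1 →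
          (-1 : ℂ) * (a ^ (j' + 1))⁻¹
              + -(((j' + 1 : ℕ) : ℂ))⁻¹ * (-(((j' + 1 : ℕ) : ℂ)) * e * (a ^ (j' + 2))⁻¹)
            = (a ^ (j' + 2))⁻¹ := by
        intro a e ha hea
        have he : e = a + 1 := by linear_combination hea
        subst he
        rw [show -(((j' + 1 : ℕ) : ℂ))⁻¹ * (-(((j' + 1 : ℕ) : ℂ)) * (a + 1) * (a ^ (j' + 2))⁻¹)
            = ((((j' + 1 : ℕ) : ℂ))⁻¹ * (((j' + 1 : ℕ) : ℂ))) * ((a + 1) * (a ^ (j' + 2))⁻¹)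
          from by ring, inv_mul_cancel₀ hjne, one_mul]
        field_simp [ha]
        ring
      filter_upwards [hderiv, ev_inv] with Y hdY ⟨_, hA⟩
      rw [hdY]
      exact (key2 _ _ hA (by ring)).symm

lemma Wlem : ∀ r, 1 ≤ r →
    Pres (r + 1) (fun Y => Complex.exp Y * ((Complex.exp Y - 1) ^ (r + 1))⁻¹) 0 := by
  intro r hr
  have h := ((rho r hr).up hr).add (rho (r + 1) (by omega))
  have hval : ((-1:ℂ)) ^ (r - 1) + (-1) ^ (r + 1 - 1) = 0 := by
    obtain ⟨r', rfl⟩ : ∃ r', r = r' + 1 := ⟨r - 1, by omega⟩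
    simp only [Nat.add_sub_cancel]
    rw [pow_succ]
    ring
  rw [← hval]
  refine h.congr ?_
  filter_upwards [ev_inv] with Y ⟨_, hA⟩
  field_simp
  ring

lemma ev_geom {X : ℂ} (hX : Complex.exp X ≠ 1) : ∀ᶠ Y in 𝓝[≠] (0:ℂ),
    Complex.exp (X - Y) - 1 ≠ 0 ∧ (Complex.exp X - 1) - (Complex.exp Y - 1) ≠ 0 ∧
    Complex.exp (X - Y) - 1
      = ((Complex.exp X - 1) - (Complex.exp Y - 1)) / Complex.exp Y := by
  have hc : Complex.exp X - 1 ≠ 0 := sub_ne_zero.mpr hX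
  have h1 : ∀ᶠ Y in 𝓝 (0:ℂ), Complex.exp (X - Y) - 1 ≠ 0 := by
    have hcont : ContinuousAt (fun Y : ℂ => Complex.exp (X - Y) - 1) 0 :=
      ((Complex.continuous_exp.comp (continuous_const.sub continuous_id)).sub
        continuous_const).continuousAt
    apply hcont.eventually_ne
    simpa using hc
  have h2 : ∀ᶠ Y in 𝓝 (0:ℂ), (Complex.exp X - 1) - (Complex.exp Y - 1) ≠ 0 := by
    have hcont : ContinuousAt (fun Y : ℂ => (Complex.exp X - 1) - (Complex.exp Y - 1)) 0 :=
      (continuous_const.sub (Complex.continuous_exp.sub continuous_const)).continuousAt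
    apply hcont.eventually_ne
    simpa using hc
  filter_upwards [h1.filter_mono nhdsWithin_le_nhds, h2.filter_mono nhdsWithin_le_nhds]
    with Y hY1 hY2
  refine ⟨hY1, hY2, ?_⟩
  rw [Complex.exp_sub]
  field_simp [Complex.exp_ne_zero Y]
  ring

lemma T0 {X : ℂ} (hX : Complex.exp X ≠ 1) : ∀ r, 1 ≤ r →
    Pres r (fun Y => 1 / ((Complex.exp Y - 1) ^ r * (Complex.exp (X - Y) - 1)))
      (1 / (Complex.exp X - 1) ^ r) := by
  have hc : Complex.exp X - 1 ≠ 0 := sub_ne_zero.mpr hX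
  intro r
  induction r with
  | zero => omega
  | succ r ih =>
    intro _
    rcases Nat.eq_zero_or_pos r with rfl | hr
    · -- r + 1 = 1
      have h1 : Pres 1 (fun Y => ((Complex.exp Y - 1))⁻¹) 1 := by
        have := rho 1 le_rfl
        simp only [pow_one, pow_zero] at this
        exact this
      have han2 : AnalyticAt ℂ
          (fun Y => Complex.exp Y * (((Complex.exp X - 1) - (Complex.exp Y - 1)))⁻¹) 0 := by
        refine analyticAt_cexp.mul ?_
        refine (analyticAt_const.sub (analyticAt_cexp.sub analyticAt_const)).inv ?_
        simpa using hc
      have h2 := ((Pres.analyticAt le_rfl (analyticAt_const : AnalyticAt ℂ (fun _ : ℂ => (1:ℂ)) (0:ℂ))).add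
        h1).add (Pres.analyticAt le_rfl han2)
      have h3 := h2.const_mul (Complex.exp X - 1)⁻¹
      have hval : (Complex.exp X - 1)⁻¹ * (0 + 1 + 0) = 1 / (Complex.exp X - 1) ^ 1 := by
        field_simp
        ring
      rw [← hval]
      refine h3.congr ?_
      filter_upwards [ev_inv, ev_geom hX] with Y ⟨_, hA⟩ ⟨hB, hcA, hBeq⟩
      rw [hBeq]
      have key : ∀ a c e : ℂ, a ≠ 0 → c - a ≠ 0 → e ≠ 0 → c ≠ 0 → e = a + 1 →
          1 / (a ^ 1 * ((c - a) / e)) = c⁻¹ * (1 + a⁻¹ + e * (c - a)⁻¹) := by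
        intro a c e ha hca he hc0 hea
        subst hea
        field_simp
        ring
      exact key (Complex.exp Y - 1) (Complex.exp X - 1) (Complex.exp Y) hA hcA
        (Complex.exp_ne_zero Y) hc (by ring)
    · -- step
      have hW := Wlem r hr
      have h2 := (hW.add ((ih hr).up hr)).const_mul (Complex.exp X - 1)⁻¹
      have hval : (Complex.exp X - 1)⁻¹ * (0 + 1 / (Complex.exp X - 1) ^ r)
          = 1 / (Complex.exp X - 1) ^ (r + 1) := by
        rw [pow_succ]
        field_simp
        ring
      rw [← hval]
      refine h2.congr ?_
      filter_upwards [ev_inv, ev_geom hX] with Y ⟨_, hA⟩ ⟨hB, hcA, hBeq⟩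
      rw [hBeq]
      have key : ∀ a c e : ℂ, a ≠ 0 → c - a ≠ 0 → e ≠ 0 → c ≠ 0 →
          1 / (a ^ (r + 1) * ((c - a) / e))
            = c⁻¹ * (e * (a ^ (r + 1))⁻¹ + 1 / (a ^ r * ((c - a) / e))) := by
        intro a c e ha hca he hc0
        rw [show a ^ (r + 1) * ((c - a) / e) = a ^ (r + 1) * (c - a) / e from by ring,
          show a ^ r * ((c - a) / e) = a ^ r * (c - a) / e from by ring,
          one_div_div, one_div_div]
        field_simp [ha, hca, hc0]
        ring
      exact key (Complex.exp Y - 1) (Complex.exp X - 1) (Complex.exp Y) hA hcA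
        (Complex.exp_ne_zero Y) hc

lemma mainlem {X : ℂ} (hX : Complex.exp X ≠ 1) : ∀ (k r : ℕ), k + 1 ≤ r →
    Pres r (fun Y => Complex.exp ((k : ℂ) * Y)
        / ((Complex.exp Y - 1) ^ r * (Complex.exp (X - Y) - 1)))
      (Complex.exp ((k : ℂ) * X) / (Complex.exp X - 1) ^ r) := by
  have hc : Complex.exp X - 1 ≠ 0 := sub_ne_zero.mpr hX
  intro k
  induction k with
  | zero =>
    intro r hr
    have := T0 hX r hr
    simp only [Nat.cast_zero, zero_mul, Complex.exp_zero]
    simp only [one_div] at this ⊢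
    exact this.congr (Filter.Eventually.of_forall fun Y => rfl)
  | succ k ih =>
    intro r hr
    obtain ⟨r', rfl⟩ : ∃ r', r = r' + 1 := ⟨r - 1, by omega⟩
    have hr' : k + 1 ≤ r' := by omega
    have hP := (ih (r' + 1) (by omega)).add ((ih r' hr').up (by omega))
    have hval : Complex.exp ((k : ℂ) * X) / (Complex.exp X - 1) ^ (r' + 1)
          + Complex.exp ((k : ℂ) * X) / (Complex.exp X - 1) ^ r'
        = Complex.exp (((k + 1 : ℕ) : ℂ) * X) / (Complex.exp X - 1) ^ (r' + 1) := by
      have hexp : Complex.exp (((k + 1 : ℕ) : ℂ) * X)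
          = Complex.exp ((k : ℂ) * X) * Complex.exp X := by
        rw [← Complex.exp_add]
        push_cast
        ring_nf
      rw [hexp, show Complex.exp X = (Complex.exp X - 1) + 1 from by ring]
      field_simp
      ring
    rw [← hval]
    refine hP.congr ?_
    filter_upwards [ev_inv, ev_geom hX] with Y ⟨_, hA⟩ ⟨hB, _, _⟩
    have hexp : Complex.exp (((k + 1 : ℕ) : ℂ) * Y)
        = Complex.exp ((k : ℂ) * Y) * Complex.exp Y := by
      rw [← Complex.exp_add]
      push_cast
      ring_nf
    rw [hexp]
    have key : ∀ a b e y : ℂ, a ≠ 0 → b ≠ 0 → y = a + 1 →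
        e * y / (a ^ (r' + 1) * b) = e / (a ^ (r' + 1) * b) + e / (a ^ r' * b) := by
      intro a b e y ha hb hy
      subst hy
      field_simp
      ring
    exact key (Complex.exp Y - 1) (Complex.exp (X - Y) - 1) (Complex.exp ((k : ℂ) * Y))
      (Complex.exp Y) hA hB (by ring)
end ResidueAux

open Complex Filter

theorem residue_exp_quotient (r k : ℕ) (hr : 1 ≤ r) (hk : k ≤ r - 1) (X : ℂ)
    (hX : Complex.exp X ≠ 1) :
    ∃ g : ℂ → ℂ, AnalyticAt ℂ g 0 ∧
      (∀ᶠ Y in nhdsWithin (0 : ℂ) {0}ᶜ,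
        Complex.exp (k * Y) / ((Complex.exp Y - 1) ^ r * (Complex.exp (X - Y) - 1))
          = g Y / Y ^ r) ∧
      iteratedDeriv (r - 1) g 0 / (Nat.factorial (r - 1) : ℂ)
        = Complex.exp (k * X) / (Complex.exp X - 1) ^ r := by
  obtain ⟨g, hg, hev, hd⟩ := ResidueAux.mainlem hX k r (by omega)
  refine ⟨g, hg, hev, ?_⟩
  rw [hd, mul_comm, mul_div_assoc, div_self (Nat.cast_ne_zero.mpr (Nat.factorial_ne_zero _)),
    mul_one]
end

section
/- For $\alpha \in \mathbb{R} \setminus \mathbb{Z}$ and $\beta \in \mathbb{C} \setminus \mathbb{Z}$, the symmetric limit $\lim_{N\to\infty} \sum_{n=-N}^{N} e^{2\pi i n \alpha}/(\beta+n)$ exists and equals $2\pi i \, e^{2\pi i \beta(1-\{\alpha\})}/(e^{2\pi i \beta}-1)$, where $\{\alpha\}$ denotes the fractional part of $\alpha$. -/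
open Complex Filter MeasureTheory Set Topology FourierTransform

noncomputable def Phi (z : ℂ) : ℂ :=
  if z = 0 then 2 * Real.pi * Complex.I else (Complex.exp (2 * Real.pi * Complex.I * z) - 1) / z

lemma Phi_mul (z : ℂ) : Phi z * z = Complex.exp (2 * Real.pi * Complex.I * z) - 1 := by
  unfold Phi; split_ifs with h
  · simp [h]
  · exact div_mul_cancel₀ _ h

lemma exp_two_pi_I_eq_one_iff (z : ℂ) :
    Complex.exp (2 * Real.pi * Complex.I * z) = 1 ↔ ∃ n : ℤ, z = n := by
  rw [Complex.exp_eq_one_iff]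
  constructor
  · rintro ⟨n, hn⟩
    refine ⟨n, ?_⟩
    have h3 : (2 * (Real.pi : ℂ) * Complex.I) * z = (2 * (Real.pi : ℂ) * Complex.I) * n := by
      linear_combination hn
    exact mul_left_cancel₀ Complex.two_pi_I_ne_zero h3
  · rintro ⟨n, rfl⟩
    exact ⟨n, by ring⟩

lemma Phi_ne_zero_of_real {u : ℝ} (h1 : -1 < u) (h2 : u < 1) : Phi (u : ℂ) ≠ 0 := by
  unfold Phi; split_ifs with h
  · exact Complex.two_pi_I_ne_zero
  · apply div_ne_zero _ h
    rw [sub_ne_zero]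
    intro hc
    obtain ⟨n, hn⟩ := (exp_two_pi_I_eq_one_iff _).mp hc
    have hun : u = (n : ℝ) := by exact_mod_cast hn
    have hn0 : n ≠ 0 := by
      rintro rfl
      exact h (by rw [hun]; norm_num)
    have h3 : (1 : ℝ) ≤ |(n : ℝ)| := by exact_mod_cast Int.one_le_abs hn0
    rw [hun] at h1 h2
    exact absurd (abs_lt.mpr ⟨h1, h2⟩) (not_lt.mpr h3)

lemma continuous_Phi : Continuous Phi := by
  rw [continuous_iff_continuousAt]
  intro z₀
  rcases eq_or_ne z₀ 0 with rfl | hz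
  · have hd : HasDerivAt (fun z : ℂ => Complex.exp (2 * Real.pi * Complex.I * z))
        (2 * Real.pi * Complex.I) 0 := by
      simpa [Function.comp_def] using ((Complex.hasDerivAt_exp ((2 : ℂ) * Real.pi * Complex.I * 0)).comp 0
        (((hasDerivAt_id (0 : ℂ)).const_mul ((2 : ℂ) * Real.pi * Complex.I))))
    have hs := hasDerivAt_iff_tendsto_slope.mp hd
    have heq : ∀ z : ℂ, z ≠ 0 →
        slope (fun z : ℂ => Complex.exp (2 * Real.pi * Complex.I * z)) 0 z = Phi z := by
      intro z hz
      rw [slope_def_field, Phi, if_neg hz]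
      simp [div_eq_div_iff hz hz]
    have hs' : Tendsto Phi (𝓝[≠] (0:ℂ)) (𝓝 (2 * Real.pi * Complex.I)) := by
      refine hs.congr' ?_
      filter_upwards [self_mem_nhdsWithin] with z hz using heq z hz
    have : Tendsto Phi (𝓝 (0:ℂ)) (𝓝 (2 * Real.pi * Complex.I)) := by
      rw [← nhdsNE_sup_pure 0, tendsto_sup]
      exact ⟨hs', by simpa [Phi] using tendsto_pure_nhds Phi 0⟩
    simpa [ContinuousAt, Phi] using this
  · have hev : ∀ᶠ z in 𝓝 z₀, (Complex.exp (2 * Real.pi * Complex.I * z) - 1) / z = Phi z := by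
      filter_upwards [isOpen_compl_singleton.mem_nhds hz] with z hz'
      simp only [Set.mem_compl_iff, Set.mem_singleton_iff] at hz'
      rw [Phi, if_neg hz']
    refine ContinuousAt.congr ?_ hev
    exact ((Complex.continuous_exp.comp (continuous_const.mul continuous_id)).sub
      continuous_const).continuousAt.div continuousAt_id hz

lemma dirichlet_geom (q : ℂ) (hq : q ≠ 0) (N : ℕ) :
    (∑ n ∈ Finset.Icc (-(N : ℤ)) (N : ℤ), q ^ n) * (q - 1)
      = q ^ ((N : ℤ) + 1) - q ^ (-(N : ℤ)) := by
  have h1 : (∑ n ∈ Finset.Icc (-(N : ℤ)) (N : ℤ), q ^ n)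
      = q ^ (-(N : ℤ)) * ∑ k ∈ Finset.range (2 * N + 1), q ^ k := by
    rw [Finset.mul_sum]
    refine Finset.sum_nbij' (fun n => (n + N).toNat) (fun k => (k : ℤ) - N) ?_ ?_ ?_ ?_ ?_
    · intro a ha
      simp only [Finset.mem_Icc] at ha
      simp only [Finset.mem_range]
      omega
    · intro a ha
      simp only [Finset.mem_range] at ha
      simp only [Finset.mem_Icc]
      omega
    · intro a ha
      simp only [Finset.mem_Icc] at ha
      omega
    · intro a ha
      simp only [Finset.mem_range] at ha
      omega
    · intro a ha
      simp only [Finset.mem_Icc] at ha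
      rw [← zpow_natCast q ((a + N).toNat), ← zpow_add₀ hq]
      congr 1
      omega
  rw [h1, mul_assoc, geom_sum_mul, mul_sub, mul_one,
    ← zpow_natCast q (2 * N + 1), ← zpow_add₀ hq]
  congr 2
  push_cast
  ring

lemma integral_exp_lin (K a : ℂ) (ha : a ≠ 0) :
    ∫ x in (0:ℝ)..1, Complex.exp (K + a * x) = Complex.exp K * (Complex.exp a - 1) / a := by
  have h : ∀ x : ℝ, Complex.exp (K + a * x) = Complex.exp K * Complex.exp (a * x) :=
    fun x => Complex.exp_add _ _
  simp_rw [h]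
  rw [intervalIntegral.integral_const_mul, _root_.integral_exp_mul_complex ha]
  simp [mul_div_assoc]

theorem symmetric_sum_limit (α : ℝ) (hα : ∀ n : ℤ, α ≠ n) (β : ℂ) (hβ : ∀ n : ℤ, β ≠ n) :
    Tendsto (fun N : ℕ => ∑ n ∈ Finset.Icc (-(N : ℤ)) (N : ℤ),
        Complex.exp (2 * Real.pi * Complex.I * n * α) / (β + n)) atTop
      (nhds (2 * Real.pi * Complex.I *
        Complex.exp (2 * Real.pi * Complex.I * β * (1 - Int.fract α)) /
        (Complex.exp (2 * Real.pi * Complex.I * β) - 1))) := by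
  set θ : ℝ := Int.fract α with hθdef
  have hθ0 : 0 < θ := Int.fract_pos.mpr (hα ⌊α⌋)
  have hθ1 : θ < 1 := Int.fract_lt_one α
  have hβ0 : β ≠ 0 := by simpa using hβ 0
  have h2pi : (2 * (Real.pi : ℂ) * Complex.I) ≠ 0 := Complex.two_pi_I_ne_zero
  set c : ℂ := Complex.exp (2 * Real.pi * Complex.I * β) - 1 with hcdef
  have hc : c ≠ 0 := by
    rw [hcdef, sub_ne_zero]
    intro h
    obtain ⟨n, hn⟩ := (exp_two_pi_I_eq_one_iff β).mp h
    exact hβ n hn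
  clear_value c
  have hβn : ∀ n : ℤ, β + n ≠ 0 := by
    intro n h
    apply hβ (-n)
    push_cast
    linear_combination h
  set f : ℝ → ℂ := fun x => Complex.exp (2 * Real.pi * Complex.I * β * (1 - (x : ℂ))) with hfdef
  set G : ℝ → ℂ := fun x =>
    f θ * β * Phi (β * ((θ : ℂ) - x)) / Phi ((θ : ℂ) - x) with hGdef
  -- Phi nonvanishing on the interval
  have hPhiNe : ∀ x ∈ Set.uIcc (0:ℝ) 1, Phi ((θ : ℂ) - x) ≠ 0 := by
    intro x hx
    rw [Set.uIcc_of_le zero_le_one, Set.mem_Icc] at hx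
    have : ((θ : ℂ) - x) = ((θ - x : ℝ) : ℂ) := by push_cast; ring
    rw [this]
    exact Phi_ne_zero_of_real (by linarith [hx.2]) (by linarith [hx.1])
  have hGcont : ContinuousOn G (Set.uIcc 0 1) := by
    apply ContinuousOn.div
    · exact (continuous_const.mul (continuous_Phi.comp
        (continuous_const.mul (continuous_const.sub Complex.continuous_ofReal)))).continuousOn
    · exact (continuous_Phi.comp
        (continuous_const.sub Complex.continuous_ofReal)).continuousOn
    · exact hPhiNe
  -- reduction of α to θ
  have hred : ∀ n : ℤ, Complex.exp (2 * Real.pi * Complex.I * n * α)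
      = Complex.exp (2 * Real.pi * Complex.I * n * θ) := by
    intro n
    have hα' : (α : ℂ) = (θ : ℂ) + (⌊α⌋ : ℤ) := by
      rw [hθdef]; push_cast [Int.fract]; ring
    rw [show 2 * (Real.pi : ℂ) * Complex.I * n * α
        = 2 * Real.pi * Complex.I * n * θ + (n * ⌊α⌋ : ℤ) * (2 * Real.pi * Complex.I) from by
      rw [hα']; push_cast; ring]
    rw [Complex.exp_add, Complex.exp_int_mul_two_pi_mul_I, mul_one]
  -- per-n integrals
  have hA : ∀ n : ℤ, ∫ x in (0:ℝ)..1,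
      f x * Complex.exp (2 * Real.pi * Complex.I * n * ((θ : ℂ) - x))
      = Complex.exp (2 * Real.pi * Complex.I * n * θ) * c / (2 * Real.pi * Complex.I * (β + n)) := by
    intro n
    have ha : (-(2 * (Real.pi : ℂ) * Complex.I * (β + n))) ≠ 0 :=
      neg_ne_zero.mpr (mul_ne_zero h2pi (hβn n))
    have hint : ∀ x : ℝ, f x * Complex.exp (2 * Real.pi * Complex.I * n * ((θ : ℂ) - x))
        = Complex.exp ((2 * Real.pi * Complex.I * β + 2 * Real.pi * Complex.I * n * θ)
            + (-(2 * Real.pi * Complex.I * (β + n))) * x) := by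
      intro x
      rw [hfdef]
      simp only []
      rw [← Complex.exp_add]
      congr 1
      push_cast
      ring
    simp_rw [hint]
    rw [integral_exp_lin _ _ ha]
    have he1 : Complex.exp (-(2 * Real.pi * Complex.I * (β + n)))
        = Complex.exp (-(2 * Real.pi * Complex.I * β)) := by
      rw [show -(2 * (Real.pi : ℂ) * Complex.I * (β + n))
          = -(2 * Real.pi * Complex.I * β) + (-n : ℤ) * (2 * Real.pi * Complex.I) from by
        push_cast; ring]
      rw [Complex.exp_add, Complex.exp_int_mul_two_pi_mul_I, mul_one]
    rw [he1, Complex.exp_add]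
    have hee : Complex.exp (2 * Real.pi * Complex.I * β)
        * Complex.exp (-(2 * Real.pi * Complex.I * β)) = 1 := by
      rw [← Complex.exp_add]; simp
    rw [hcdef]
    set E1 := Complex.exp (2 * Real.pi * Complex.I * (n:ℂ) * (θ:ℂ)) with hE1
    set E2 := Complex.exp (2 * Real.pi * Complex.I * β) with hE2
    set E3 := Complex.exp (-(2 * Real.pi * Complex.I * β)) with hE3
    rw [div_eq_div_iff ha (mul_ne_zero h2pi (hβn n))]
    linear_combination (2 * (Real.pi:ℂ) * Complex.I * (β + n)) * E1 * hee
  have hB : ∀ n : ℤ, (∫ x in (0:ℝ)..1, Complex.exp (2 * Real.pi * Complex.I * n * ((θ : ℂ) - x)))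
      = if n = 0 then 1 else 0 := by
    intro n
    rcases eq_or_ne n 0 with rfl | hn
    · simp
    · have hnC : (n : ℂ) ≠ 0 := Int.cast_ne_zero.mpr hn
      have ha : (-(2 * (Real.pi : ℂ) * Complex.I * n)) ≠ 0 :=
        neg_ne_zero.mpr (mul_ne_zero h2pi hnC)
      have hint : ∀ x : ℝ, Complex.exp (2 * Real.pi * Complex.I * n * ((θ : ℂ) - x))
          = Complex.exp ((2 * Real.pi * Complex.I * n * θ)
              + (-(2 * Real.pi * Complex.I * n)) * x) := by
        intro x
        congr 1
        push_cast
        ring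
      simp_rw [hint]
      rw [integral_exp_lin _ _ ha, if_neg hn]
      have he1 : Complex.exp (-(2 * Real.pi * Complex.I * n)) = 1 := by
        rw [show -(2 * (Real.pi : ℂ) * Complex.I * n) = (-n : ℤ) * (2 * Real.pi * Complex.I) from by
          push_cast; ring]
        exact Complex.exp_int_mul_two_pi_mul_I _
      rw [he1]
      simp
  -- pointwise Dirichlet kernel identity
  have hpt : ∀ N : ℕ, ∀ x ∈ Set.uIcc (0:ℝ) 1,
      (f x - f θ) * ∑ n ∈ Finset.Icc (-(N : ℤ)) (N : ℤ),
          Complex.exp (2 * Real.pi * Complex.I * n * ((θ : ℂ) - x))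
      = G x * Complex.exp (2 * Real.pi * Complex.I * (((N : ℝ) + 1 : ℝ) : ℂ) * ((θ : ℂ) - x))
        - G x * Complex.exp (2 * Real.pi * Complex.I * ((-(N : ℝ) : ℝ) : ℂ) * ((θ : ℂ) - x)) := by
    intro N x hx
    set q := Complex.exp (2 * Real.pi * Complex.I * ((θ : ℂ) - x)) with hq
    have hq0 : q ≠ 0 := Complex.exp_ne_zero _
    have hsum : ∑ n ∈ Finset.Icc (-(N : ℤ)) (N : ℤ),
        Complex.exp (2 * Real.pi * Complex.I * (n : ℂ) * ((θ : ℂ) - x))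
        = ∑ n ∈ Finset.Icc (-(N : ℤ)) (N : ℤ), q ^ n := by
      refine Finset.sum_congr rfl fun n _ => ?_
      rw [hq, ← Complex.exp_int_mul]
      congr 1
      ring
    have hE1 : Complex.exp (2 * Real.pi * Complex.I * (((N : ℝ) + 1 : ℝ) : ℂ) * ((θ : ℂ) - x))
        = q ^ ((N : ℤ) + 1) := by
      rw [hq, ← Complex.exp_int_mul]
      congr 1
      push_cast
      ring
    have hE2 : Complex.exp (2 * Real.pi * Complex.I * ((-(N : ℝ) : ℝ) : ℂ) * ((θ : ℂ) - x))
        = q ^ (-(N : ℤ)) := by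
      rw [hq, ← Complex.exp_int_mul]
      congr 1
      push_cast
      ring
    rw [hsum, hE1, hE2, ← mul_sub, ← dirichlet_geom q hq0 N]
    by_cases hxθ : x = θ
    · have hq1 : q = 1 := by rw [hq, hxθ]; simp
      rw [hxθ, hq1]
      simp
    · have hu0 : ((θ : ℂ) - x) ≠ 0 := by
        intro h
        apply hxθ
        have h' : (θ : ℂ) = (x : ℂ) := sub_eq_zero.mp h
        exact_mod_cast h'.symm
      have key1 : f x - f θ = f θ * (Phi (β * ((θ : ℂ) - x)) * (β * ((θ : ℂ) - x))) := by
        rw [Phi_mul, hfdef]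
        simp only []
        have hsplit : Complex.exp (2 * Real.pi * Complex.I * β * (1 - (x : ℂ)))
            = Complex.exp (2 * Real.pi * Complex.I * β * (1 - (θ : ℂ)))
              * Complex.exp (2 * Real.pi * Complex.I * (β * ((θ : ℂ) - x))) := by
          rw [← Complex.exp_add]
          congr 1
          ring
        rw [hsplit]
        ring
      have key2 : q - 1 = Phi ((θ : ℂ) - x) * ((θ : ℂ) - x) := by
        rw [hq, (Phi_mul ((θ : ℂ) - x))]
      have hΦ := hPhiNe x hx
      rw [key1, key2, hGdef]
      simp only []
      field_simp
  -- the key integral computation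
  have hkey : ∀ N : ℕ, (∫ x in (0:ℝ)..1, (f x - f θ) * ∑ n ∈ Finset.Icc (-(N : ℤ)) (N : ℤ),
        Complex.exp (2 * Real.pi * Complex.I * n * ((θ : ℂ) - x)))
      = (∑ n ∈ Finset.Icc (-(N : ℤ)) (N : ℤ),
          Complex.exp (2 * Real.pi * Complex.I * n * θ) * c / (2 * Real.pi * Complex.I * (β + n)))
        - f θ := by
    intro N
    have hfc : Continuous f := by
      rw [hfdef]
      exact Complex.continuous_exp.comp
        (continuous_const.mul (continuous_const.sub Complex.continuous_ofReal))
    have hec : ∀ γ : ℂ, Continuous fun x : ℝ =>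
        Complex.exp (2 * Real.pi * Complex.I * γ * ((θ : ℂ) - x)) := fun γ =>
      Complex.continuous_exp.comp
        (continuous_const.mul (continuous_const.sub Complex.continuous_ofReal))
    have hint_eq : ∀ x : ℝ, (f x - f θ) * ∑ n ∈ Finset.Icc (-(N : ℤ)) (N : ℤ),
          Complex.exp (2 * Real.pi * Complex.I * (n : ℂ) * ((θ : ℂ) - x))
        = ∑ n ∈ Finset.Icc (-(N : ℤ)) (N : ℤ),
            (f x * Complex.exp (2 * Real.pi * Complex.I * (n : ℂ) * ((θ : ℂ) - x))
              - f θ * Complex.exp (2 * Real.pi * Complex.I * (n : ℂ) * ((θ : ℂ) - x))) := by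
      intro x
      rw [Finset.mul_sum]
      exact Finset.sum_congr rfl fun n _ => by ring
    simp_rw [hint_eq]
    rw [intervalIntegral.integral_finset_sum]
    · have hterm : ∀ n ∈ Finset.Icc (-(N : ℤ)) (N : ℤ),
          (∫ x in (0:ℝ)..1, (f x * Complex.exp (2 * Real.pi * Complex.I * (n : ℂ) * ((θ : ℂ) - x))
            - f θ * Complex.exp (2 * Real.pi * Complex.I * (n : ℂ) * ((θ : ℂ) - x))))
          = Complex.exp (2 * Real.pi * Complex.I * n * θ) * c / (2 * Real.pi * Complex.I * (β + n))
            - f θ * (if n = 0 then 1 else 0) := by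
        intro n _
        rw [intervalIntegral.integral_sub
          (f := fun x => f x * Complex.exp (2 * Real.pi * Complex.I * (n : ℂ) * ((θ : ℂ) - x)))
          (g := fun x => f θ * Complex.exp (2 * Real.pi * Complex.I * (n : ℂ) * ((θ : ℂ) - x)))
          ((hfc.mul (hec n)).intervalIntegrable 0 1)
          ((continuous_const.mul (hec n)).intervalIntegrable 0 1),
          hA n, intervalIntegral.integral_const_mul, hB n]
      rw [Finset.sum_congr rfl hterm, Finset.sum_sub_distrib, ← Finset.mul_sum,
        Finset.sum_ite_eq' _ (0 : ℤ) (fun _ => (1 : ℂ))]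
      simp
    · exact fun n _ => ((hfc.mul (hec n)).sub (continuous_const.mul (hec n))).intervalIntegrable 0 1
  set J : ℝ → ℂ := fun w => ∫ x in (0:ℝ)..1,
      G x * Complex.exp (2 * Real.pi * Complex.I * (w : ℂ) * ((θ : ℂ) - x)) with hJdef
  have hJ0 : Tendsto J (cocompact ℝ) (𝓝 0) := by
    set F : ℝ → ℂ := (Set.Ioc (0:ℝ) 1).indicator G with hFdef
    have hK : ∀ w : ℝ, J w = Complex.exp (2 * Real.pi * Complex.I * (w : ℂ) * (θ : ℂ)) * (𝓕 F w) := by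
      intro w
      have hptw : ∀ x : ℝ, G x * Complex.exp (2 * Real.pi * Complex.I * (w : ℂ) * ((θ : ℂ) - x))
          = Complex.exp (2 * Real.pi * Complex.I * (w : ℂ) * (θ : ℂ))
            * (Complex.exp (((-2 * Real.pi * x * w : ℝ) : ℂ) * Complex.I) * G x) := by
        intro x
        rw [show (2 * Real.pi * Complex.I * (w : ℂ) * ((θ : ℂ) - x) : ℂ)
            = 2 * Real.pi * Complex.I * (w : ℂ) * (θ : ℂ)
              + ((-2 * Real.pi * x * w : ℝ) : ℂ) * Complex.I from by push_cast; ring,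
          Complex.exp_add]
        ring
      have hind : (fun v : ℝ => Complex.exp (((-2 * Real.pi * v * w : ℝ) : ℂ) * Complex.I) • F v)
          = (Set.Ioc (0:ℝ) 1).indicator
              (fun v => Complex.exp (((-2 * Real.pi * v * w : ℝ) : ℂ) * Complex.I) * G v) := by
        funext v
        by_cases hv : v ∈ Set.Ioc (0:ℝ) 1
        · rw [hFdef]
          simp [Set.indicator_of_mem hv, smul_eq_mul]
        · rw [hFdef]
          simp [Set.indicator_of_notMem hv]
      calc J w = ∫ x in Set.Ioc (0:ℝ) 1,
              G x * Complex.exp (2 * Real.pi * Complex.I * (w : ℂ) * ((θ : ℂ) - x)) := by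
            rw [hJdef]
            exact intervalIntegral.integral_of_le zero_le_one
        _ = ∫ x in Set.Ioc (0:ℝ) 1, Complex.exp (2 * Real.pi * Complex.I * (w : ℂ) * (θ : ℂ))
              * (Complex.exp (((-2 * Real.pi * x * w : ℝ) : ℂ) * Complex.I) * G x) :=
            MeasureTheory.setIntegral_congr_fun measurableSet_Ioc fun x _ => hptw x
        _ = Complex.exp (2 * Real.pi * Complex.I * (w : ℂ) * (θ : ℂ))
              * ∫ x in Set.Ioc (0:ℝ) 1,
                  Complex.exp (((-2 * Real.pi * x * w : ℝ) : ℂ) * Complex.I) * G x :=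
            MeasureTheory.integral_const_mul _ _
        _ = Complex.exp (2 * Real.pi * Complex.I * (w : ℂ) * (θ : ℂ)) * (𝓕 F w) := by
            rw [Real.fourier_real_eq_integral_exp_smul, hind,
              MeasureTheory.integral_indicator measurableSet_Ioc]
    have hnorm : ∀ w : ℝ, ‖J w‖ = ‖𝓕 F w‖ := by
      intro w
      rw [hK w, norm_mul]
      have h1 : ‖Complex.exp (2 * Real.pi * Complex.I * (w : ℂ) * (θ : ℂ))‖ = 1 := by
        rw [show (2 * Real.pi * Complex.I * (w : ℂ) * (θ : ℂ) : ℂ)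
            = ((2 * Real.pi * w * θ : ℝ) : ℂ) * Complex.I from by push_cast; ring,
]
        exact Complex.norm_exp_ofReal_mul_I _
      rw [h1, one_mul]
    rw [tendsto_zero_iff_norm_tendsto_zero]
    have h0 := (Real.zero_at_infty_fourier F).norm
    simp only [norm_zero] at h0
    exact h0.congr fun w => (hnorm w).symm
  -- sequences into cocompact
  have hseq1 : Tendsto (fun N : ℕ => ((N : ℝ) + 1)) atTop (cocompact ℝ) := by
    refine Tendsto.mono_right (tendsto_atTop_add_const_right _ 1 tendsto_natCast_atTop_atTop) ?_
    rw [cocompact_eq_atBot_atTop]; exact le_sup_right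
  have hseq2 : Tendsto (fun N : ℕ => (-(N : ℝ))) atTop (cocompact ℝ) := by
    refine Tendsto.mono_right (tendsto_neg_atTop_atBot.comp tendsto_natCast_atTop_atTop) ?_
    rw [cocompact_eq_atBot_atTop]; exact le_sup_left
  -- the difference identity
  have hdiff : ∀ N : ℕ, (∑ n ∈ Finset.Icc (-(N : ℤ)) (N : ℤ),
        Complex.exp (2 * Real.pi * Complex.I * n * α) / (β + n))
      - 2 * Real.pi * Complex.I * f θ / c
      = 2 * Real.pi * Complex.I / c * (J ((N : ℝ) + 1) - J (-(N : ℝ))) := by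
    intro N
    have hec : ∀ γ : ℂ, Continuous fun x : ℝ =>
        Complex.exp (2 * Real.pi * Complex.I * γ * ((θ : ℂ) - x)) := fun γ =>
      Complex.continuous_exp.comp
        (continuous_const.mul (continuous_const.sub Complex.continuous_ofReal))
    have e1 : ∀ n ∈ Finset.Icc (-(N : ℤ)) (N : ℤ),
        Complex.exp (2 * Real.pi * Complex.I * n * α) / (β + n)
        = 2 * Real.pi * Complex.I / c * (Complex.exp (2 * Real.pi * Complex.I * n * θ) * c
            / (2 * Real.pi * Complex.I * (β + n))) := by
      intro n _
      rw [hred n]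
      rw [div_mul_div_comm, div_eq_div_iff (hβn n)
        (mul_ne_zero hc (mul_ne_zero h2pi (hβn n)))]
      ring
    rw [Finset.sum_congr rfl e1, ← Finset.mul_sum,
      show (2 * Real.pi * Complex.I * f θ / c : ℂ) = 2 * Real.pi * Complex.I / c * f θ from by ring,
      ← mul_sub, ← hkey N]
    congr 1
    have hI1 : IntervalIntegrable (fun x : ℝ => G x
        * Complex.exp (2 * Real.pi * Complex.I * (((N : ℝ) + 1 : ℝ) : ℂ) * ((θ : ℂ) - x)))
        MeasureTheory.volume 0 1 :=
      (hGcont.mul (hec _).continuousOn).intervalIntegrable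
    have hI2 : IntervalIntegrable (fun x : ℝ => G x
        * Complex.exp (2 * Real.pi * Complex.I * ((-(N : ℝ) : ℝ) : ℂ) * ((θ : ℂ) - x)))
        MeasureTheory.volume 0 1 :=
      (hGcont.mul (hec _).continuousOn).intervalIntegrable
    rw [hJdef]
    simp only []
    rw [← intervalIntegral.integral_sub hI1 hI2]
    exact intervalIntegral.integral_congr fun x hx => hpt N x hx
  -- conclude
  rw [← tendsto_sub_nhds_zero_iff]
  have hlim : Tendsto (fun N : ℕ =>
      2 * Real.pi * Complex.I / c * (J ((N : ℝ) + 1) - J (-(N : ℝ)))) atTop (𝓝 0) := by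
    have h1 := hJ0.comp hseq1
    have h2 := hJ0.comp hseq2
    simpa using ((h1.sub h2).const_mul (2 * Real.pi * Complex.I / c))
  refine hlim.congr fun N => ?_
  exact (hdiff N).symm
end

section
/- Let $\alpha \in \mathbb{R} \setminus \mathbb{Z}$. Then there exists a constant $c = c(\alpha) > 0$ such that for all positive integers $N$ and all $\beta \in \mathbb{C}$ with $\mathrm{Im}\,\beta \neq 0$, one has $\left| \sum_{n=-N}^{N} e^{2\pi i n \alpha}/(\beta+n) \right| \leq c/|\mathrm{Im}\,\beta|$. -/
open Complex Filter

lemma arctan_sub_lower {p q : ℝ} (hpq : p ≤ q) :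
    (q - p) / (Real.sqrt (1 + p^2) * Real.sqrt (1 + q^2))
      ≤ Real.arctan q - Real.arctan p := by
  have hA : (0:ℝ) < Real.sqrt (1 + p^2) := Real.sqrt_pos.2 (by positivity)
  have hB : (0:ℝ) < Real.sqrt (1 + q^2) := Real.sqrt_pos.2 (by positivity)
  have hsin : Real.sin (Real.arctan q - Real.arctan p)
      = (q - p) / (Real.sqrt (1 + p^2) * Real.sqrt (1 + q^2)) := by
    rw [Real.sin_sub, Real.sin_arctan, Real.cos_arctan, Real.sin_arctan, Real.cos_arctan]
    field_simp
  have h0 : 0 ≤ Real.arctan q - Real.arctan p := by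
    have := Real.arctan_strictMono.monotone hpq
    linarith
  calc (q - p) / (Real.sqrt (1 + p^2) * Real.sqrt (1 + q^2))
      = Real.sin (Real.arctan q - Real.arctan p) := hsin.symm
    _ ≤ Real.arctan q - Real.arctan p := Real.sin_le h0

lemma inv_diff_norm (β : ℂ) (hβ : β.im ≠ 0) (a : ℝ) :
    ‖(β + ((a:ℂ)+1))⁻¹ - (β + a)⁻¹‖ ≤
      (Real.arctan ((β.re + (a+1)) / |β.im|) - Real.arctan ((β.re + a) / |β.im|)) / |β.im| := by
  set s : ℝ := |β.im| with hsdef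
  have hs : 0 < s := abs_pos.2 hβ
  set p : ℝ := (β.re + a) / s with hp
  set q : ℝ := (β.re + (a+1)) / s with hq
  have hu : β + (a:ℂ) ≠ 0 := by
    intro h
    apply hβ
    have := congrArg Complex.im h
    simpa using this
  have hv : β + ((a:ℂ)+1) ≠ 0 := by
    intro h
    apply hβ
    have := congrArg Complex.im h
    simpa using this
  have key : (β + ((a:ℂ)+1))⁻¹ - (β + a)⁻¹ = -((β + a) * (β + ((a:ℂ)+1)))⁻¹ := by
    field_simp
    ring
  have hnu : ‖β + (a:ℂ)‖ = s * Real.sqrt (1 + p^2) := by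
    rw [show s * Real.sqrt (1 + p^2) = Real.sqrt (s^2 * (1 + p^2)) by
      rw [Real.sqrt_mul (sq_nonneg s), Real.sqrt_sq hs.le]]
    rw [Complex.norm_def, Complex.normSq_apply]
    congr 1
    have h2 : s^2 = β.im^2 := by rw [hsdef, _root_.sq_abs]
    simp only [Complex.add_re, Complex.add_im, Complex.ofReal_re, Complex.ofReal_im]
    rw [hp]; field_simp
    linarith
  have hnv : ‖β + ((a:ℂ)+1)‖ = s * Real.sqrt (1 + q^2) := by
    rw [show s * Real.sqrt (1 + q^2) = Real.sqrt (s^2 * (1 + q^2)) by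
      rw [Real.sqrt_mul (sq_nonneg s), Real.sqrt_sq hs.le]]
    rw [Complex.norm_def, Complex.normSq_apply]
    congr 1
    have h2 : s^2 = β.im^2 := by rw [hsdef, _root_.sq_abs]
    simp only [Complex.add_re, Complex.add_im, Complex.ofReal_re, Complex.ofReal_im,
      Complex.one_re, Complex.one_im]
    rw [hq]; field_simp
    linarith
  have hA : (0:ℝ) < Real.sqrt (1 + p^2) := Real.sqrt_pos.2 (by positivity)
  have hB : (0:ℝ) < Real.sqrt (1 + q^2) := Real.sqrt_pos.2 (by positivity)
  have hqp : q - p = 1 / s := by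
    rw [hp, hq]
    field_simp
    ring
  have harc := arctan_sub_lower (show p ≤ q by
    have : 0 < 1/s := by positivity
    linarith [hqp])
  rw [key, norm_neg, norm_inv, norm_mul, hnu, hnv]
  rw [hqp] at harc
  have h2 : (s * Real.sqrt (1 + p ^ 2) * (s * Real.sqrt (1 + q ^ 2)))⁻¹
      = (1 / s / (Real.sqrt (1 + p^2) * Real.sqrt (1 + q^2))) / s := by
    field_simp
  rw [h2]
  gcongr

lemma geom_partial_bound {e : ℂ} (he : ‖e‖ = 1) (he1 : e ≠ 1) (m : ℕ) :
    ‖∑ k ∈ Finset.range m, e ^ k‖ ≤ 2 / ‖e - 1‖ := by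
  rw [geom_sum_eq he1, norm_div]
  have h1 : (0:ℝ) < ‖e - 1‖ := norm_pos_iff.2 (sub_ne_zero.2 he1)
  gcongr
  calc ‖e ^ m - 1‖ ≤ ‖e ^ m‖ + ‖(1:ℂ)‖ := norm_sub_le _ _
    _ = 2 := by rw [norm_pow, he]; norm_num

theorem partial_sum_bound (α : ℝ) (hα : ∀ n : ℤ, α ≠ n) :
    ∃ c > (0 : ℝ), ∀ N : ℕ, 1 ≤ N → ∀ β : ℂ, β.im ≠ 0 →
      ‖∑ n ∈ Finset.Icc (-(N : ℤ)) (N : ℤ),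
          Complex.exp (2 * Real.pi * Complex.I * n * α) / (β + n)‖ ≤ c / |β.im| := by
  set e : ℂ := Complex.exp (2 * Real.pi * Complex.I * α) with he_def
  have hpiI : (2 * (Real.pi:ℂ) * Complex.I) ≠ 0 := by
    simp [Real.pi_ne_zero, Complex.I_ne_zero, Complex.ofReal_ne_zero]
  have he1 : e ≠ 1 := by
    intro h
    rw [he_def, Complex.exp_eq_one_iff] at h
    obtain ⟨n, hn⟩ := h
    apply hα n
    have h3 : (2 * (Real.pi:ℂ) * Complex.I) * (α : ℂ)
        = (2 * (Real.pi:ℂ) * Complex.I) * (n : ℂ) := by linear_combination hn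
    have := mul_left_cancel₀ hpiI h3
    exact_mod_cast this
  have he_norm : ‖e‖ = 1 := by
    rw [he_def, show (2 * (Real.pi:ℂ) * Complex.I * α) = ((2 * Real.pi * α : ℝ) : ℂ) * Complex.I
      by push_cast; ring]
    exact Complex.norm_exp_ofReal_mul_I _
  set K : ℝ := 2 / ‖e - 1‖ with hK_def
  have hK : 0 < K := by
    have h1 : (0:ℝ) < ‖e - 1‖ := norm_pos_iff.2 (sub_ne_zero.2 he1)
    positivity
  refine ⟨K * (1 + Real.pi), by positivity, ?_⟩
  intro N hN β hβ
  set s : ℝ := |β.im| with hs_def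
  have hs : 0 < s := abs_pos.2 hβ
  let a : ℕ → ℂ := fun k => Complex.exp (2 * Real.pi * Complex.I * ((k:ℂ) - (N:ℂ)) * α)
  let b : ℕ → ℂ := fun k => (β + ((k:ℂ) - (N:ℂ)))⁻¹
  have ha_def : ∀ k : ℕ, a k = Complex.exp (2 * Real.pi * Complex.I * ((k:ℂ) - (N:ℂ)) * α) :=
    fun k => rfl
  have hb_def : ∀ k : ℕ, b k = (β + ((k:ℂ) - (N:ℂ)))⁻¹ := fun k => rfl
  have hset : Finset.Icc (-(N:ℤ)) (N:ℤ)
      = Finset.map ⟨fun k : ℕ => (k:ℤ) - N, fun x y h => by simpa using h⟩ (Finset.range (2*N+1)) := by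
    ext n
    simp only [Finset.mem_Icc, Finset.mem_map, Finset.mem_range, Function.Embedding.coeFn_mk]
    dsimp only [DFunLike.coe]
    constructor
    · rintro ⟨h1, h2⟩
      exact ⟨(n + N).toNat, by omega, by omega⟩
    · rintro ⟨k, hk, rfl⟩
      omega
  have hsum : ∑ n ∈ Finset.Icc (-(N : ℤ)) (N : ℤ),
      Complex.exp (2 * Real.pi * Complex.I * n * α) / (β + n)
      = ∑ k ∈ Finset.range (2*N+1), b k • a k := by
    rw [hset, Finset.sum_map]
    apply Finset.sum_congr rfl
    intro k _
    simp only [Function.Embedding.coeFn_mk, smul_eq_mul]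
    dsimp only [DFunLike.coe]
    rw [ha_def, hb_def]
    push_cast
    rw [div_eq_mul_inv]
    ring
  -- partial sums of a are bounded by K
  have hA : ∀ m : ℕ, ‖∑ k ∈ Finset.range m, a k‖ ≤ K := by
    intro m
    have hak : ∀ k : ℕ, a k = Complex.exp (2 * Real.pi * Complex.I * (-(N:ℂ)) * α) * e ^ k := by
      intro k
      rw [ha_def, he_def, ← Complex.exp_nat_mul, ← Complex.exp_add]
      congr 1
      push_cast
      ring
    rw [Finset.sum_congr rfl (fun k _ => hak k)]
    rw [← Finset.mul_sum, norm_mul]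
    have hw : ‖Complex.exp (2 * Real.pi * Complex.I * (-(N:ℂ)) * α)‖ = 1 := by
      rw [show (2 * (Real.pi:ℂ) * Complex.I * (-(N:ℂ)) * α)
          = ((2 * Real.pi * (-(N:ℝ)) * α : ℝ) : ℂ) * Complex.I by push_cast; ring]
      exact Complex.norm_exp_ofReal_mul_I _
    rw [hw, one_mul]
    exact geom_partial_bound he_norm he1 m
  -- the telescoping arctan bound
  let G : ℕ → ℝ := fun k => Real.arctan ((β.re + ((k:ℝ) - (N:ℝ))) / s)
  have hG_def : ∀ k : ℕ, G k = Real.arctan ((β.re + ((k:ℝ) - (N:ℝ))) / s) := fun k => rfl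
  have hstep : ∀ i : ℕ, ‖b (i+1) - b i‖ ≤ (G (i+1) - G i) / s := by
    intro i
    have h := inv_diff_norm β hβ ((i:ℝ) - N)
    have e1 : b (i+1) - b i
        = (β + ((((i:ℝ) - N : ℝ):ℂ)+1))⁻¹ - (β + (((i:ℝ) - N : ℝ):ℂ))⁻¹ := by
      rw [hb_def, hb_def]
      push_cast
      ring_nf
    have e2 : G (i+1) = Real.arctan ((β.re + (((i:ℝ) - N) + 1)) / s) := by
      rw [hG_def]
      push_cast
      ring_nf
    have e3 : G i = Real.arctan ((β.re + ((i:ℝ) - N)) / s) := rfl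
    rw [e1, e2, e3]
    exact h
  have hG_tel : ∑ i ∈ Finset.range (2*N), (G (i+1) - G i) = G (2*N) - G 0 :=
    Finset.sum_range_sub G (2*N)
  have hG_pi : G (2*N) - G 0 ≤ Real.pi := by
    have h1 := Real.arctan_lt_pi_div_two ((β.re + (((2*N:ℕ):ℝ) - (N:ℝ))) / s)
    have h2 := Real.neg_pi_div_two_lt_arctan ((β.re + (((0:ℕ):ℝ) - (N:ℝ))) / s)
    rw [hG_def, hG_def]
    linarith
  -- Abel summation
  rw [hsum, Finset.sum_range_by_parts b a (2*N+1)]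
  have h2N : 2*N+1-1 = 2*N := by omega
  rw [h2N]
  have hb2N : ‖b (2*N)‖ ≤ s⁻¹ := by
    have him : s ≤ ‖β + (((2*N:ℕ):ℂ) - (N:ℂ))‖ := by
      have := Complex.abs_im_le_norm (β + (((2*N:ℕ):ℂ) - (N:ℂ)))
      simp only [Complex.add_im, Complex.sub_im, Complex.natCast_im, Complex.sub_re] at this
      rw [hs_def]
      simpa using this
    rw [hb_def]
    rw [norm_inv]
    exact inv_anti₀ hs him
  calc ‖b (2*N) • ∑ i ∈ Finset.range (2*N+1), a i
        - ∑ i ∈ Finset.range (2*N), (b (i+1) - b i) • ∑ j ∈ Finset.range (i+1), a j‖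
      ≤ ‖b (2*N) • ∑ i ∈ Finset.range (2*N+1), a i‖
        + ‖∑ i ∈ Finset.range (2*N), (b (i+1) - b i) • ∑ j ∈ Finset.range (i+1), a j‖ :=
      norm_sub_le _ _
    _ ≤ s⁻¹ * K + ∑ i ∈ Finset.range (2*N), ‖(b (i+1) - b i) • ∑ j ∈ Finset.range (i+1), a j‖ := by
      gcongr ?_ + ?_
      · rw [smul_eq_mul, norm_mul]
        exact mul_le_mul hb2N (hA _) (norm_nonneg _) (by positivity)
      · exact norm_sum_le _ _
    _ ≤ s⁻¹ * K + ∑ i ∈ Finset.range (2*N), (G (i+1) - G i) / s * K := by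
      gcongr ?_ + ?_
      · exact le_rfl
      · apply Finset.sum_le_sum
        intro i _
        rw [smul_eq_mul, norm_mul]
        exact mul_le_mul (hstep i) (hA _)
          (norm_nonneg _) (le_trans (norm_nonneg _) (hstep i))
    _ = s⁻¹ * K + (G (2*N) - G 0) / s * K := by
      rw [← Finset.sum_mul, ← Finset.sum_div, hG_tel]
    _ ≤ s⁻¹ * K + Real.pi / s * K := by
      gcongr
    _ = K * (1 + Real.pi) / s := by
      field_simp
end
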